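/- Let q be a prime power, and let α, R be real numbers with 0 < α < 1/2 and 0 < R < 1. Then there exist a constant c > 0, a strictly increasing sequence of lengths (n_i) with gcd(n_i, q) = 1, and nonzero ideals C_i ⊆ R(F_q, n_i) (cyclic codes) such that dim_{F_q}(C_i)/n_i → R as i → ∞ and d(C_i) ≥ c · n_i^α for all i. -/

import Mathlib

open Polynomial

/-- The ring R(F,n) = F[X]/(X^n - 1). -/
abbrev CycRing (F : Type*) [Field F] (n : ℕ) := AdjoinRoot (X ^ n - Polynomial.C (1 : F))

/-- The unique representative of degree < n of an element of F[X]/(X^n-1). -/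
noncomputable def cycRep {F : Type*} [Field F] {n : ℕ} (f : CycRing F n) : F[X] :=
  if h : n = 0 then 0
  else AdjoinRoot.modByMonicHom (monic_X_pow_sub_C (1 : F) h) f

/-- Hamming weight of an element of F[X]/(X^n-1): the number of nonzero coefficients of
its representative of degree < n. -/
noncomputable def cycWt {F : Type*} [Field F] {n : ℕ} (f : CycRing F n) : ℕ :=
  (cycRep f).support.card

/-- Minimum distance of a cyclic code (ideal of F[X]/(X^n-1)). -/
noncomputable def cycDist {F : Type*} [Field F] {n : ℕ} (I : Ideal (CycRing F n)) : ℕ :=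
  sInf {w | ∃ f ∈ I, f ≠ 0 ∧ cycWt f = w}

/-- Dimension of a cyclic code as an F-vector space. -/
noncomputable def cycDim (F : Type*) [Field F] {n : ℕ} (I : Ideal (CycRing F n)) : ℕ :=
  Module.finrank F (Submodule.restrictScalars F I)

/-- The invariant μ(F,n). -/
noncomputable def mu (F : Type*) [Field F] (n : ℕ) : ℕ :=
  sInf {w | ∃ f : CycRing F n, f ≠ 0 ∧
    cycDist (Ideal.span {f}) + cycDim F (Ideal.span {f}) = w}

open Matrix

section Aux

variable {F : Type*} [Field F]

lemma cycRep_mk {n : ℕ} (hn : n ≠ 0) (p : F[X]) :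
    cycRep (AdjoinRoot.mk (X ^ n - C (1:F)) p) = p %ₘ (X ^ n - C 1) := by
  rw [cycRep, dif_neg hn, AdjoinRoot.modByMonicHom_mk]

lemma mk_cycRep {n : ℕ} (hn : n ≠ 0) (f : CycRing F n) :
    AdjoinRoot.mk _ (cycRep f) = f := by
  obtain ⟨p, rfl⟩ := AdjoinRoot.mk_surjective f
  rw [cycRep_mk hn]
  conv_rhs => rw [← modByMonic_add_div p (X ^ n - C (1:F))]
  rw [map_add, _root_.map_mul, AdjoinRoot.mk_self, zero_mul, add_zero]

lemma cycRep_ne_zero {n : ℕ} (hn : n ≠ 0) {f : CycRing F n} (hf : f ≠ 0) : cycRep f ≠ 0 :=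
  fun h => hf (by rw [← mk_cycRep hn f, h, map_zero])

lemma cycRep_degree_lt {n : ℕ} (hn : n ≠ 0) (f : CycRing F n) :
    (cycRep f).degree < n := by
  obtain ⟨p, rfl⟩ := AdjoinRoot.mk_surjective f
  rw [cycRep_mk hn]
  have := degree_modByMonic_lt p (monic_X_pow_sub_C (1:F) hn)
  rwa [degree_X_pow_sub_C (Nat.pos_of_ne_zero hn)] at this

lemma dvd_cycRep {n : ℕ} (hn : n ≠ 0) {g : F[X]} (hg : g ∣ X ^ n - C 1)
    {f : CycRing F n} (hf : f ∈ Ideal.span {AdjoinRoot.mk (X ^ n - C (1:F)) g}) :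
    g ∣ cycRep f := by
  rw [Ideal.mem_span_singleton] at hf
  obtain ⟨c, rfl⟩ := hf
  obtain ⟨h, rfl⟩ := AdjoinRoot.mk_surjective c
  rw [← _root_.map_mul, cycRep_mk hn,
    modByMonic_eq_sub_mul_div _ (X ^ n - C (1:F))]
  exact dvd_sub (dvd_mul_right g h) (hg.mul_right _)

/-- BCH bound core: a nonzero polynomial of degree < n vanishing at
`β^0, …, β^(t-1)` for a primitive n-th root β has at least t nonzero coefficients. -/
lemma bch_bound {n : ℕ} {E : Type*} [Field E] [Algebra F E] {β : E}
    (hβ : IsPrimitiveRoot β n) {p : F[X]} (hp0 : p ≠ 0) (hpd : p.natDegree < n)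
    {t : ℕ} (hroots : ∀ j < t, Polynomial.aeval (β ^ j) p = 0) :
    t ≤ p.support.card := by
  by_contra hlt
  push_neg at hlt
  set w := p.support.card with hw
  have e : Fin w ≃o {x // x ∈ p.support} := p.support.orderIsoOfFin rfl
  set x : Fin w → E := fun k => β ^ ((e k : ℕ)) with hx
  have hxinj : Function.Injective x := by
    intro a b hab
    have ha : ((e a : ℕ)) < n := lt_of_le_of_lt (le_natDegree_of_mem_supp _ (e a).2) hpd
    have hb : ((e b : ℕ)) < n := lt_of_le_of_lt (le_natDegree_of_mem_supp _ (e b).2) hpd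
    have := hβ.pow_inj ha hb hab
    exact e.injective (Subtype.ext this)
  set v : Fin w → E := fun k => algebraMap F E (p.coeff (e k)) with hv
  have hsum : ∀ j : Fin w, (((Matrix.vandermonde x)ᵀ).mulVec v) j = 0 := by
    intro j
    have h0 : Polynomial.aeval (β ^ (j : ℕ)) p = 0 := hroots _ (lt_trans j.2 hlt)
    rw [Polynomial.aeval_def, Polynomial.eval₂_eq_sum, Polynomial.sum_def] at h0
    have hre : ∑ i ∈ p.support, algebraMap F E (p.coeff i) * (β ^ (j:ℕ)) ^ i
        = ∑ k : Fin w, x k ^ (j : ℕ) * v k := by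
      rw [← Finset.sum_coe_sort p.support]
      refine (Fintype.sum_equiv e.toEquiv _ _ fun k => ?_).symm
      rw [hx, hv]
      simp only [RelIso.coe_fn_toEquiv]
      rw [pow_right_comm, mul_comm]
    rw [hre] at h0
    simpa [Matrix.mulVec, dotProduct, Matrix.transpose_apply,
      Matrix.vandermonde] using h0
  have hdet : ((Matrix.vandermonde x)ᵀ).det ≠ 0 := by
    rw [Matrix.det_transpose]
    exact Matrix.det_vandermonde_ne_zero_iff.mpr hxinj
  have hv0 : v = 0 := Matrix.eq_zero_of_mulVec_eq_zero hdet (funext hsum)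
  obtain ⟨i0, hi0⟩ := Polynomial.support_nonempty.mpr hp0
  have : v (e.symm ⟨i0, hi0⟩) = 0 := by rw [hv0]; rfl
  rw [hv] at this
  simp only [OrderIso.apply_symm_apply] at this
  have : p.coeff i0 = 0 := (algebraMap F E).injective (by simpa using this)
  exact (Polynomial.mem_support_iff.mp hi0) this

end Aux

section Dim

variable {F : Type*} [Field F]

lemma cycDim_span {n : ℕ} (hn : n ≠ 0) {g : F[X]} (hgm : g.Monic) (hgd : g ∣ X ^ n - C 1) :
    cycDim F (Ideal.span {AdjoinRoot.mk (X ^ n - C (1:F)) g}) + g.natDegree = n := by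
  have hP : (X ^ n - C (1:F)).Monic := monic_X_pow_sub_C _ hn
  have hP0 : (X ^ n - C (1:F)) ≠ 0 := hP.ne_zero
  haveI : Module.Finite F (CycRing F n) := (AdjoinRoot.powerBasis hP0).finite
  have hfr : Module.finrank F (CycRing F n) = n := by
    rw [(AdjoinRoot.powerBasis hP0).finrank, AdjoinRoot.powerBasis_dim, natDegree_X_pow_sub_C]
  set I : Ideal (CycRing F n) := Ideal.span {AdjoinRoot.mk (X ^ n - C (1:F)) g} with hI
  have hle : Ideal.span {X ^ n - C (1:F)} ≤ Ideal.span {g} :=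
    Ideal.span_singleton_le_span_singleton.mpr hgd
  have hmap : Ideal.map (Ideal.Quotient.mkₐ F (Ideal.span {X ^ n - C (1:F)})) (Ideal.span {g})
      = I := by
    rw [Ideal.map_span, Set.image_singleton]
    rfl
  have E1 : (CycRing F n ⧸ I) ≃ₐ[F] AdjoinRoot g := by
    rw [← hmap]
    exact DoubleQuot.quotQuotEquivQuotOfLEₐ F hle
  have hfr2 : Module.finrank F (AdjoinRoot g) = g.natDegree := by
    rw [(AdjoinRoot.powerBasis (Monic.ne_zero hgm)).finrank, AdjoinRoot.powerBasis_dim]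
  have h3 : Module.finrank F (CycRing F n ⧸ Submodule.restrictScalars F I)
      = g.natDegree := by
    rw [(Submodule.Quotient.restrictScalarsEquiv F I).finrank_eq,
      E1.toLinearEquiv.finrank_eq, hfr2]
  have h4 := Submodule.finrank_quotient_add_finrank (Submodule.restrictScalars F I)
  rw [h3, hfr] at h4
  have h5 : cycDim F I = Module.finrank F (Submodule.restrictScalars F I) := rfl
  omega

end Dim

section MinpolyBound

variable {F : Type*} [Field F] [Fintype F]

lemma pow_card_pow_eq {q m : ℕ} (hq : Fintype.card F = q) (a : F) : a ^ q ^ m = a := by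
  induction m with
  | zero => simpa using rfl
  | succ m ih =>
    rw [pow_succ, pow_mul, ih, ← hq, FiniteField.pow_card]

lemma minpoly_natDegree_le {q m : ℕ} (hq : Fintype.card F = q) (hm : m ≠ 0)
    {E : Type*} [Field E] [Algebra F E] {x : E} (hx : x ^ q ^ m = x)
    (hint : IsIntegral F x) : (minpoly F x).natDegree ≤ m := by
  classical
  have hq2 : 1 < q := hq ▸ Fintype.one_lt_card
  -- characteristic
  haveI : CharP F (ringChar F) := ringChar.charP F
  haveI : Fact (ringChar F).Prime := ⟨CharP.char_is_prime F (ringChar F)⟩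
  haveI : CharP E (ringChar F) :=
    charP_of_injective_algebraMap (algebraMap F E).injective (ringChar F)
  obtain ⟨k, hkp, hqk⟩ := FiniteField.card F (ringChar F)
  rw [hq] at hqk
  -- every element of F⟮x⟯ satisfies y ^ q ^ m = y
  have hall : ∀ y ∈ IntermediateField.adjoin F {x}, y ^ q ^ m = y := by
    intro y hy
    refine IntermediateField.adjoin_induction F
      (p := fun y _ => y ^ q ^ m = y) ?_ ?_ ?_ ?_ ?_ hy
    · intro z hz; rw [Set.mem_singleton_iff] at hz; rw [hz]; exact hx
    · intro a; rw [← map_pow, pow_card_pow_eq hq]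
    · intro a b _ _ ha hb
      have hreq : q ^ m = (ringChar F) ^ ((k : ℕ) * m) := by rw [pow_mul, ← hqk]
      rw [hreq] at ha hb ⊢
      rw [add_pow_char_pow, ha, hb]
    · intro a _ ha; rw [inv_pow, ha]
    · intro a b _ _ ha hb; rw [mul_pow, ha, hb]
  -- the subfield F⟮x⟯ is finite of cardinality q ^ finrank
  haveI : FiniteDimensional F (IntermediateField.adjoin F {x}) :=
    IntermediateField.adjoin.finiteDimensional hint
  haveI : Finite (IntermediateField.adjoin F {x}) := Module.finite_of_finite F
  haveI : Fintype (IntermediateField.adjoin F {x}) := Fintype.ofFinite _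
  have hcard : Fintype.card (IntermediateField.adjoin F {x})
      = q ^ Module.finrank F (IntermediateField.adjoin F {x}) := by
    rw [Module.card_eq_pow_finrank (K := F), hq]
  -- count: all its elements are roots of X ^ q ^ m - X over E
  have hqm1 : 1 < q ^ m := Nat.one_lt_pow hm hq2
  · have hP0 : (X ^ q ^ m - X : E[X]) ≠ 0 := by
      refine sub_ne_zero.mpr fun h => ?_
      have := congrArg natDegree h
      rw [natDegree_X_pow, natDegree_X] at this
      omega
    have hsub : (Finset.univ.image
        (fun y : (IntermediateField.adjoin F {x}) => (y : E)))
        ⊆ (X ^ q ^ m - X : E[X]).roots.toFinset := by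
      intro z hz
      rw [Finset.mem_image] at hz
      obtain ⟨y, -, rfl⟩ := hz
      rw [Multiset.mem_toFinset, mem_roots hP0]
      have := hall (y : E) y.2
      simp only [IsRoot.def, eval_sub, eval_pow, eval_X]
      rw [this, sub_self]
    have hcle : Fintype.card (IntermediateField.adjoin F {x}) ≤ q ^ m := by
      calc Fintype.card (IntermediateField.adjoin F {x})
          = (Finset.univ.image
            (fun y : (IntermediateField.adjoin F {x}) => (y : E))).card := by
            rw [Finset.card_image_of_injective _ Subtype.val_injective, Finset.card_univ]
        _ ≤ (X ^ q ^ m - X : E[X]).roots.toFinset.card := Finset.card_le_card hsub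
        _ ≤ Multiset.card (X ^ q ^ m - X : E[X]).roots := Multiset.toFinset_card_le _
        _ ≤ (X ^ q ^ m - X : E[X]).natDegree := card_roots' _
        _ ≤ q ^ m := by
            refine le_trans (natDegree_sub_le _ _) ?_
            simp only [natDegree_X_pow, natDegree_X, sup_le_iff, le_refl, true_and]
            omega
    rw [hcard] at hcle
    have := (Nat.pow_le_pow_iff_right hq2).mp hcle
    rwa [IntermediateField.adjoin.finrank hint] at this

end MinpolyBound

section Gseq

variable {F : Type*} [Field F]

open scoped Classical in
/-- Auxiliary sequence of divisors of `Xⁿ - 1`. -/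
noncomputable def gseq (F : Type*) [Field F] {E : Type*} [Field E] [Algebra F E]
    (β : E) : ℕ → F[X]
  | 0 => 1
  | (t+1) => if minpoly F (β ^ t) ∣ gseq F β t then gseq F β t
      else gseq F β t * minpoly F (β ^ t)

variable {E : Type*} [Field E] [Algebra F E] {β : E}

lemma gseq_monic (hint : ∀ j : ℕ, IsIntegral F (β ^ j)) (t : ℕ) : (gseq F β t).Monic := by
  induction t with
  | zero => exact monic_one
  | succ t ih =>
    rw [gseq]
    split
    · exact ih
    · exact ih.mul (minpoly.monic (hint t))

lemma gseq_ne_zero (hint : ∀ j : ℕ, IsIntegral F (β ^ j)) (t : ℕ) : gseq F β t ≠ 0 :=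
  (gseq_monic hint t).ne_zero

lemma gseq_dvd_self_succ (t : ℕ) : gseq F β t ∣ gseq F β (t+1) := by
  rw [gseq]
  split
  · exact dvd_rfl
  · exact dvd_mul_right _ _

lemma gseq_minpoly_dvd (hj : ∀ {j t : ℕ}, j < t → minpoly F (β ^ j) ∣ gseq F β t) : True := trivial

lemma minpoly_dvd_gseq {j t : ℕ} (hjt : j < t) : minpoly F (β ^ j) ∣ gseq F β t := by
  induction t with
  | zero => omega
  | succ t ih =>
    rcases Nat.lt_succ_iff_lt_or_eq.mp hjt with h | rfl
    · exact (ih h).trans (gseq_dvd_self_succ t)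
    · rw [gseq]
      split
      · assumption
      · exact dvd_mul_left _ _
lemma gseq_dvd (hint : ∀ j : ℕ, IsIntegral F (β ^ j)) {n : ℕ}
    (hdvd : ∀ j : ℕ, minpoly F (β ^ j) ∣ (X ^ n - C (1:F))) (t : ℕ) :
    gseq F β t ∣ X ^ n - C (1:F) := by
  induction t with
  | zero => exact one_dvd _
  | succ t ih =>
    rw [gseq]
    split
    · exact ih
    · rename_i h
      have hcop : IsCoprime (gseq F β t) (minpoly F (β ^ t)) :=
        ((minpoly.irreducible (hint t)).coprime_iff_not_dvd.mpr h).symm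
      exact hcop.mul_dvd ih (hdvd t)

lemma gseq_natDegree_succ_le (hint : ∀ j : ℕ, IsIntegral F (β ^ j)) {m : ℕ}
    (hdeg : ∀ j : ℕ, (minpoly F (β ^ j)).natDegree ≤ m) (t : ℕ) :
    (gseq F β (t+1)).natDegree ≤ (gseq F β t).natDegree + m := by
  rw [gseq]
  split
  · omega
  · rw [natDegree_mul (gseq_ne_zero hint t) (minpoly.ne_zero (hint t))]
    exact Nat.add_le_add_left (hdeg t) _

lemma gseq_natDegree_le (hint : ∀ j : ℕ, IsIntegral F (β ^ j)) {m : ℕ}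
    (hdeg : ∀ j : ℕ, (minpoly F (β ^ j)).natDegree ≤ m) (t : ℕ) :
    (gseq F β t).natDegree ≤ t * m := by
  induction t with
  | zero => simp [gseq]
  | succ t ih =>
    have h1 := gseq_natDegree_succ_le hint hdeg t
    have h2 : (t+1) * m = t * m + m := by ring
    omega

end Gseq


section Key

variable {F : Type*} [Field F] [Fintype F]

lemma key_lemma {q : ℕ} (hq : Fintype.card F = q) {m d T : ℕ} (hm : m ≠ 0)
    (hd : 1 ≤ d) (hdm : d * m < T) (hTn : T + m ≤ q ^ m - 1) :
    ∃ I : Ideal (CycRing F (q ^ m - 1)), I ≠ ⊥ ∧ d ≤ cycDist I ∧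
      ∃ r : ℕ, T ≤ r ∧ r < T + m ∧ cycDim F I + r = q ^ m - 1 := by
  classical
  set n := q ^ m - 1 with hn
  have hq2 : 1 < q := hq ▸ Fintype.one_lt_card
  have hqm : 1 < q ^ m := Nat.one_lt_pow hm hq2
  have hn0 : n ≠ 0 := by omega
  have hn1 : n + 1 = q ^ m := by omega
  haveI : CharP F (ringChar F) := ringChar.charP F
  have hp : (ringChar F).Prime := CharP.char_is_prime F (ringChar F)
  haveI : Fact (ringChar F).Prime := ⟨hp⟩
  set E := AlgebraicClosure F with hE
  haveI : CharP E (ringChar F) :=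
    charP_of_injective_algebraMap (algebraMap F E).injective (ringChar F)
  haveI : NeZero ((n : ℕ) : E) := by
    constructor
    rw [Ne, CharP.cast_eq_zero_iff E (ringChar F) n]
    intro hdvd
    obtain ⟨k, hkp, hqk⟩ := FiniteField.card F (ringChar F)
    rw [hq] at hqk
    have h1 : ringChar F ∣ q ^ m :=
      dvd_pow (hqk ▸ dvd_pow_self _ (by exact_mod_cast k.ne_zero)) hm
    have h2 : ringChar F ∣ q ^ m - n := Nat.dvd_sub h1 hdvd
    have h3 : q ^ m - n = 1 := by omega
    rw [h3, Nat.dvd_one] at h2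
    exact hp.one_lt.ne' h2
  obtain ⟨β, hβ⟩ := HasEnoughRootsOfUnity.exists_primitiveRoot E n
  have hβn : β ^ n = 1 := hβ.pow_eq_one
  have hint : ∀ j : ℕ, IsIntegral F (β ^ j) := by
    intro j
    refine ⟨X ^ n - C 1, monic_X_pow_sub_C _ hn0, ?_⟩
    rw [eval₂_sub, eval₂_X_pow, eval₂_C, _root_.map_one, pow_right_comm, hβn, one_pow, sub_self]
  have hdvdXn : ∀ j : ℕ, minpoly F (β ^ j) ∣ (X ^ n - C (1:F)) := by
    intro j
    apply minpoly.dvd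
    rw [map_sub, map_pow, aeval_X, aeval_C, _root_.map_one, pow_right_comm, hβn, one_pow, sub_self]
  have hpowq : ∀ j : ℕ, (β ^ j) ^ q ^ m = β ^ j := by
    intro j
    rw [← pow_mul, mul_comm, ← hn1, pow_mul, pow_succ, hβn, one_mul]
  have hdeg : ∀ j : ℕ, (minpoly F (β ^ j)).natDegree ≤ m := fun j =>
    minpoly_natDegree_le hq hm (hpowq j) (hint j)
  have hglow : n ≤ (gseq F β n).natDegree := by
    have hmap0 : (gseq F β n).map (algebraMap F E) ≠ 0 :=
      (Polynomial.map_ne_zero_iff (algebraMap F E).injective).mpr (gseq_ne_zero hint n)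
    have hsub : (Finset.range n).image (fun j => β ^ j)
        ⊆ ((gseq F β n).map (algebraMap F E)).roots.toFinset := by
      intro z hz
      rw [Finset.mem_image] at hz
      obtain ⟨j, hj, rfl⟩ := hz
      rw [Finset.mem_range] at hj
      rw [Multiset.mem_toFinset, mem_roots hmap0]
      obtain ⟨c, hc⟩ := minpoly_dvd_gseq (F := F) (β := β) hj
      rw [IsRoot.def, eval_map, ← aeval_def, hc, _root_.map_mul, minpoly.aeval, zero_mul]
    have hcard : ((Finset.range n).image (fun j => β ^ j)).card = n := by
      rw [Finset.card_image_of_injOn, Finset.card_range]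
      intro a ha b hb hab
      exact hβ.pow_inj (Finset.mem_range.mp ha) (Finset.mem_range.mp hb) hab
    calc n = ((Finset.range n).image (fun j => β ^ j)).card := hcard.symm
      _ ≤ ((gseq F β n).map (algebraMap F E)).roots.toFinset.card := Finset.card_le_card hsub
      _ ≤ Multiset.card ((gseq F β n).map (algebraMap F E)).roots := Multiset.toFinset_card_le _
      _ ≤ ((gseq F β n).map (algebraMap F E)).natDegree := card_roots' _
      _ = (gseq F β n).natDegree := (gseq_monic hint n).natDegree_map _
  have hex : ∃ t, T ≤ (gseq F β t).natDegree := ⟨n, le_trans (by omega) hglow⟩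
  set t0 := Nat.find hex with ht0
  have hT_le : T ≤ (gseq F β t0).natDegree := Nat.find_spec hex
  have hlt_t0 : ∀ t < t0, (gseq F β t).natDegree < T := fun t ht =>
    Nat.lt_of_not_le (Nat.find_min hex ht)
  have hd_le_t0 : d ≤ t0 := by
    rw [ht0, Nat.le_find_iff]
    intro t ht hTt
    have h1 := gseq_natDegree_le hint hdeg t
    have h2 : t * m ≤ (d-1) * m := Nat.mul_le_mul_right m (by omega)
    have h3 : (d-1) * m ≤ d * m := Nat.mul_le_mul_right m (by omega)
    omega
  have ht0_pos : t0 ≠ 0 := by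
    intro h
    rw [h] at hT_le
    have : (gseq F β 0 : F[X]) = 1 := rfl
    rw [this, natDegree_one] at hT_le
    omega
  have hupper : (gseq F β t0).natDegree < T + m := by
    obtain ⟨t1, ht1⟩ : ∃ t1, t0 = t1 + 1 := ⟨t0 - 1, by omega⟩
    have h1 := hlt_t0 t1 (by omega)
    have h2 := gseq_natDegree_succ_le hint hdeg t1
    rw [ht1] at hT_le ⊢
    omega
  set G := gseq F β t0 with hG
  have hGmonic : G.Monic := gseq_monic hint t0
  have hGdvd : G ∣ X ^ n - C (1:F) := gseq_dvd hint hdvdXn t0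
  have hmkG : AdjoinRoot.mk (X ^ n - C (1:F)) G ≠ 0 := by
    rw [Ne, AdjoinRoot.mk_eq_zero]
    intro hdvd'
    have h5 := natDegree_le_of_dvd hdvd' hGmonic.ne_zero
    rw [natDegree_X_pow_sub_C] at h5
    omega
  refine ⟨Ideal.span {AdjoinRoot.mk (X ^ n - C (1:F)) G}, ?_, ?_, G.natDegree, hT_le, hupper,
    cycDim_span hn0 hGmonic hGdvd⟩
  · intro h; rw [Ideal.span_singleton_eq_bot] at h; exact hmkG h
  · have hwt : ∀ f ∈ Ideal.span {AdjoinRoot.mk (X ^ n - C (1:F)) G}, f ≠ 0 → t0 ≤ cycWt f := by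
      intro f hfI hf0
      have hrep0 := cycRep_ne_zero hn0 hf0
      have hrepdeg : (cycRep f).natDegree < n :=
        (natDegree_lt_iff_degree_lt hrep0).mpr (cycRep_degree_lt hn0 f)
      refine bch_bound hβ hrep0 hrepdeg ?_
      intro j hj
      obtain ⟨c, hc⟩ := (minpoly_dvd_gseq (F := F) (β := β) hj).trans
        (dvd_cycRep hn0 hGdvd hfI)
      rw [hc, _root_.map_mul, minpoly.aeval, zero_mul]
    refine le_csInf ⟨cycWt (AdjoinRoot.mk _ G), AdjoinRoot.mk _ G,
      Ideal.mem_span_singleton_self _, hmkG, rfl⟩ ?_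
    rintro w ⟨f, hfI, hf0, rfl⟩
    exact le_trans hd_le_t0 (hwt f hfI hf0)

end Key


section Main

variable {F : Type*} [Field F] [Fintype F]

-- the analytic preliminaries, separated out
lemma L_tendsto_zero {q : ℕ} (hq2 : 1 < q) {α : ℝ} (hα0 : 0 < α) (hα1 : α < 1) :
    Filter.Tendsto
      (fun m : ℕ => ((⌈((q ^ m - 1 : ℕ) : ℝ) ^ α⌉₊ * m + m + 1 : ℕ) : ℝ) / ((q ^ m - 1 : ℕ) : ℝ))
      Filter.atTop (nhds 0) := by
  have hq0 : (0:ℝ) < (q:ℝ) := by exact_mod_cast Nat.lt_of_lt_of_le Nat.zero_lt_one hq2.le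
  set r : ℝ := (q:ℝ) ^ (α - (1:ℝ)) with hrdef
  have hr0 : 0 < r := Real.rpow_pos_of_pos hq0 _
  have hr1 : r < 1 := Real.rpow_lt_one_of_one_lt_of_neg (by exact_mod_cast hq2) (by linarith)
  have key : ∀ m : ℕ, m ≠ 0 →
      ((⌈((q ^ m - 1 : ℕ) : ℝ) ^ α⌉₊ * m + m + 1 : ℕ) : ℝ) / ((q ^ m - 1 : ℕ) : ℝ)
        ≤ 8 * ((m : ℝ) * r ^ m) := by
    intro m hm
    have h2qm : (2:ℕ) ≤ q ^ m := le_trans hq2 (Nat.le_self_pow hm q)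
    have hNcast : ((q ^ m - 1 : ℕ) : ℝ) = (q:ℝ) ^ m - 1 := by
      push_cast [Nat.cast_sub (by omega : 1 ≤ q ^ m)]
      ring
    have h2qmR : (2:ℝ) ≤ (q:ℝ) ^ m := by exact_mod_cast h2qm
    have hNpos : (0:ℝ) < ((q ^ m - 1 : ℕ) : ℝ) := by rw [hNcast]; linarith
    have hNhalf : (q:ℝ) ^ m / 2 ≤ ((q ^ m - 1 : ℕ) : ℝ) := by rw [hNcast]; linarith
    have hNle : ((q ^ m - 1 : ℕ) : ℝ) ≤ (q:ℝ) ^ m := by rw [hNcast]; linarith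
    set A : ℝ := ((q ^ m - 1 : ℕ) : ℝ) ^ α with hA
    have hA1 : 1 ≤ A := Real.one_le_rpow (by exact_mod_cast (by omega : 1 ≤ q ^ m - 1)) hα0.le
    have hm1 : (1:ℝ) ≤ (m:ℝ) := by exact_mod_cast Nat.one_le_iff_ne_zero.mpr hm
    have hceil : (⌈A⌉₊ : ℝ) ≤ A + 1 := (Nat.ceil_lt_add_one (by positivity)).le
    have hnum : ((⌈((q ^ m - 1 : ℕ) : ℝ) ^ α⌉₊ * m + m + 1 : ℕ) : ℝ) ≤ 4 * A * m := by
      push_cast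
      nlinarith [hceil, hA1, hm1]
    have hAr : A / ((q ^ m - 1 : ℕ) : ℝ) ≤ 2 * r ^ m := by
      have hup : A ≤ (q:ℝ) ^ (α * m) := by
        rw [hA]
        calc ((q ^ m - 1 : ℕ) : ℝ) ^ α ≤ ((q:ℝ) ^ m) ^ α :=
              Real.rpow_le_rpow (le_of_lt hNpos) hNle hα0.le
          _ = (q:ℝ) ^ (α * m) := by
              rw [← Real.rpow_natCast (q:ℝ) m, ← Real.rpow_mul hq0.le, mul_comm]
      have hrm : r ^ m = (q:ℝ) ^ ((α - 1) * m) := by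
        rw [hrdef, ← Real.rpow_natCast ((q:ℝ) ^ (α - (1:ℝ))) m, ← Real.rpow_mul hq0.le]
      calc A / ((q ^ m - 1 : ℕ) : ℝ) ≤ (q:ℝ) ^ (α * m) / ((q:ℝ) ^ m / 2) := by
            exact div_le_div₀ (by positivity) hup (by linarith) hNhalf
        _ = 2 * (q:ℝ) ^ ((α - 1) * m) := by
            rw [div_div_eq_mul_div, mul_comm]
            rw [sub_mul, one_mul, Real.rpow_sub hq0, Real.rpow_natCast]
            ring
        _ = 2 * r ^ m := by rw [hrm]
    calc ((⌈((q ^ m - 1 : ℕ) : ℝ) ^ α⌉₊ * m + m + 1 : ℕ) : ℝ) / ((q ^ m - 1 : ℕ) : ℝ)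
        ≤ (4 * A * m) / ((q ^ m - 1 : ℕ) : ℝ) := by
          gcongr
      _ = 4 * (m:ℝ) * (A / ((q ^ m - 1 : ℕ) : ℝ)) := by ring
      _ ≤ 4 * (m:ℝ) * (2 * r ^ m) := by
          apply mul_le_mul_of_nonneg_left hAr (by positivity)
      _ = 8 * ((m : ℝ) * r ^ m) := by ring
  have htend : Filter.Tendsto (fun m : ℕ => 8 * ((m:ℝ) * r ^ m)) Filter.atTop (nhds 0) := by
    have h8 : (8:ℝ) * 0 = 0 := by ring
    have := (tendsto_self_mul_const_pow_of_abs_lt_one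
      (by rw [abs_of_pos hr0]; exact hr1)).const_mul (8:ℝ)
    rwa [h8] at this
  refine squeeze_zero' ?_ ?_ htend
  · filter_upwards with m
    positivity
  · filter_upwards [Filter.eventually_ne_atTop 0] with m hm
    exact key m hm

end Main


/-- For every 0 < α < 1/2 and every rate 0 < R < 1, there exist sequences of cyclic codes
over F_q of strictly increasing lengths n_i coprime to q, of rate tending to R, and
minimum distance at least c·n_i^α. -/
theorem good_cyclic_sequences (q : ℕ) (F : Type*) [Field F] [Fintype F]
    (hq : Fintype.card F = q) (α R : ℝ)
    (hα0 : 0 < α) (hα : α < 1 / 2) (hR0 : 0 < R) (hR1 : R < 1) :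
    ∃ c : ℝ, 0 < c ∧ ∃ (n : ℕ → ℕ) (I : ∀ i : ℕ, Ideal (CycRing F (n i))),
      StrictMono n ∧ (∀ i, Nat.Coprime (n i) q) ∧ (∀ i, I i ≠ ⊥) ∧
      Filter.Tendsto (fun i => (cycDim F (I i) : ℝ) / (n i : ℝ)) Filter.atTop (nhds R) ∧
      ∀ i, c * (n i : ℝ) ^ α ≤ (cycDist (I i) : ℝ) := by
  classical
  have hq2 : 1 < q := hq ▸ Fintype.one_lt_card
  set N : ℕ → ℕ := fun m => q ^ m - 1 with hN
  set dd : ℕ → ℕ := fun m => ⌈((N m : ℕ) : ℝ) ^ α⌉₊ with hdd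
  set kk : ℕ → ℕ := fun m => ⌊R * ((N m : ℕ) : ℝ)⌋₊ with hkk
  set L : ℕ → ℝ := fun m => ((dd m * m + m + 1 : ℕ) : ℝ) / ((N m : ℕ) : ℝ) with hL
  have hLtend : Filter.Tendsto L Filter.atTop (nhds 0) :=
    L_tendsto_zero hq2 hα0 (by linarith)
  have hmin : (0:ℝ) < min R (1 - R) := lt_min hR0 (by linarith)
  have hev1 : ∀ᶠ m in Filter.atTop, L m < min R (1-R) :=
    hLtend.eventually_lt_const hmin
  obtain ⟨M0, hM0⟩ := Filter.eventually_atTop.mp hev1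
  set M := M0 + 1 with hM
  -- all numerical conditions hold from M on
  have hfacts : ∀ m, M ≤ m →
      (m ≠ 0 ∧ 1 ≤ dd m ∧ dd m * m < N m - kk m ∧ (N m - kk m) + m ≤ N m ∧
       m ≤ kk m ∧ kk m ≤ N m ∧ 1 ≤ N m) := by
    intro m hm
    have hm0 : m ≠ 0 := by omega
    have hLm : L m < min R (1-R) := hM0 m (by omega)
    have h2qm : 2 ≤ q ^ m := le_trans hq2 (Nat.le_self_pow hm0 q)
    have hN1 : 1 ≤ N m := by simp only [hN]; omega
    have hNpos : (0:ℝ) < (N m : ℝ) := by exact_mod_cast Nat.lt_of_lt_of_le Nat.zero_lt_one hN1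
    have hkR : (kk m : ℝ) ≤ R * (N m : ℝ) := Nat.floor_le (by positivity)
    have hkn : kk m ≤ N m := by
      have h1 : (kk m : ℝ) ≤ (N m : ℝ) := le_trans hkR (by nlinarith)
      exact_mod_cast h1
    have hnum : ((dd m * m + m + 1 : ℕ) : ℝ) < min R (1-R) * (N m:ℝ) := by
      rw [hL] at hLm
      exact (div_lt_iff₀ hNpos).mp hLm
    have hmk : m ≤ kk m := by
      apply Nat.le_floor
      have h1 : ((m:ℝ)) ≤ ((dd m * m + m + 1 : ℕ) : ℝ) := by
        push_cast
        have h0 : (0:ℝ) ≤ (dd m : ℝ) * (m:ℝ) := by positivity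
        linarith
      have h2 := lt_of_le_of_lt h1 hnum
      have h3 : min R (1-R) * (N m:ℝ) ≤ R * (N m:ℝ) :=
        mul_le_mul_of_nonneg_right (min_le_left _ _) hNpos.le
      linarith
    have hdm : dd m * m < N m - kk m := by
      have hsum : ((dd m * m : ℕ) : ℝ) ≤ ((dd m * m + m + 1 : ℕ) : ℝ) := by
        push_cast
        have h0 : (0:ℝ) ≤ (m:ℝ) := by positivity
        linarith
      have h3 : min R (1-R) * (N m:ℝ) ≤ (1 - R) * (N m:ℝ) :=
        mul_le_mul_of_nonneg_right (min_le_right _ _) hNpos.le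
      have hTcast : ((N m - kk m : ℕ) : ℝ) = (N m:ℝ) - (kk m:ℝ) := by
        push_cast [Nat.cast_sub hkn]; ring
      have h4 : ((dd m * m : ℕ):ℝ) < ((N m - kk m : ℕ):ℝ) := by
        rw [hTcast]; nlinarith
      exact_mod_cast h4
    have hd1 : 1 ≤ dd m := Nat.ceil_pos.mpr (Real.rpow_pos_of_pos hNpos α)
    exact ⟨hm0, hd1, hdm, by omega, hmk, hkn, hN1⟩
  -- construct the codes
  have hkey : ∀ i : ℕ, ∃ I : Ideal (CycRing F (q ^ (i + M) - 1)), I ≠ ⊥ ∧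
      dd (i + M) ≤ cycDist I ∧
      ∃ rr : ℕ, (N (i + M) - kk (i + M)) ≤ rr ∧ rr < (N (i + M) - kk (i + M)) + (i + M) ∧
        cycDim F I + rr = q ^ (i + M) - 1 := by
    intro i
    obtain ⟨hm0, hd1, hdm, hTn, _, _, _⟩ := hfacts (i + M) (by omega)
    exact key_lemma hq hm0 hd1 hdm hTn
  choose I hIbot hIdist rr hrr1 hrr2 hrr3 using hkey
  refine ⟨1, one_pos, (fun i => q ^ (i + M) - 1), I, ?_, ?_, hIbot, ?_, ?_⟩
  · -- strict monotonicity
    intro a b hab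
    have h1 := Nat.pow_lt_pow_right hq2 (by omega : a + M < b + M)
    have h2 : 1 ≤ q ^ (a + M) := Nat.one_le_pow _ _ (by omega)
    simp only
    omega
  · -- coprimality
    intro i
    have ha : 1 ≤ q ^ (i + M) := Nat.one_le_pow _ _ (by omega)
    have hself : Nat.Coprime (q ^ (i + M) - 1) (q ^ (i + M)) := by
      have h : q ^ (i + M) = 1 + (q ^ (i + M) - 1) := by omega
      nth_rewrite 2 [h]
      rw [Nat.coprime_add_self_right]
      exact Nat.coprime_one_right _
    exact hself.coprime_dvd_right (dvd_pow_self q (by omega : i + M ≠ 0))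
  · -- convergence of the rate
    have hNposR : ∀ i : ℕ, (0:ℝ) < ((N (i + M) : ℕ) : ℝ) := by
      intro i
      have := (hfacts (i + M) (by omega)).2.2.2.2.2.2
      exact_mod_cast Nat.lt_of_lt_of_le Nat.zero_lt_one this
    -- upper bound : f i ≤ R
    have hup : ∀ i : ℕ, (cycDim F (I i) : ℝ) / ((q ^ (i + M) - 1 : ℕ) : ℝ) ≤ R := by
      intro i
      obtain ⟨_, _, _, _, hmk, hkn, hN1⟩ := hfacts (i + M) (by omega)
      have hdimk : cycDim F (I i) ≤ kk (i + M) := by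
        have h1 := hrr1 i; have h3 := hrr3 i
        simp only [hN] at *
        omega
      have hkR : (kk (i + M) : ℝ) ≤ R * (N (i + M) : ℝ) := Nat.floor_le (by positivity)
      rw [div_le_iff₀ (hNposR i)]
      calc (cycDim F (I i) : ℝ) ≤ (kk (i + M) : ℝ) := by exact_mod_cast hdimk
        _ ≤ R * (N (i + M) : ℝ) := hkR
    -- lower bound : R - (1 + m)/N ≤ f i
    have hlow : ∀ i : ℕ, R - ((1 + (i + M) : ℕ) : ℝ) / ((N (i + M) : ℕ) : ℝ)
        ≤ (cycDim F (I i) : ℝ) / ((q ^ (i + M) - 1 : ℕ) : ℝ) := by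
      intro i
      obtain ⟨_, _, _, _, hmk, hkn, hN1⟩ := hfacts (i + M) (by omega)
      have hdimlow : kk (i + M) - (i + M) ≤ cycDim F (I i) := by
        have h1 := hrr2 i; have h3 := hrr3 i
        simp only [hN] at *
        omega
      have hklow : R * (N (i + M) : ℝ) - 1 ≤ (kk (i + M) : ℝ) := by
        have h99 : kk (i + M) = ⌊R * ((N (i + M)) : ℝ)⌋₊ := rfl
        have h98 := Nat.lt_floor_add_one (R * ((N (i + M)) : ℝ))
        rw [← h99] at h98
        linarith
      have hc1 : ((kk (i + M) - (i + M) : ℕ) : ℝ) = (kk (i + M) : ℝ) - ((i + M : ℕ) : ℝ) := by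
        push_cast [Nat.cast_sub hmk]; ring
      rw [sub_le_iff_le_add, ← add_div, le_div_iff₀ (hNposR i)]
      have h2 : (cycDim F (I i) : ℝ) ≥ (kk (i + M) : ℝ) - ((i + M : ℕ) : ℝ) := by
        rw [← hc1]; exact_mod_cast hdimlow
      push_cast at h2 ⊢
      nlinarith [hNposR i, hklow]
    -- lower sequence tends to R
    have haux : Filter.Tendsto (fun i : ℕ => L (i + M)) Filter.atTop (nhds 0) :=
      hLtend.comp (Filter.tendsto_add_atTop_nat M)
    have h10 : Filter.Tendsto
        (fun i : ℕ => ((1 + (i + M) : ℕ) : ℝ) / ((N (i + M) : ℕ) : ℝ))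
        Filter.atTop (nhds 0) := by
      refine squeeze_zero' ?_ ?_ haux
      · filter_upwards with i; positivity
      · filter_upwards with i
        simp only [hL]
        have hnum : ((1 + (i + M) : ℕ) : ℝ)
            ≤ ((dd (i + M) * (i + M) + (i + M) + 1 : ℕ) : ℝ) := by
          push_cast
          have h0 : (0:ℝ) ≤ (dd (i + M) : ℝ) * ((i + M : ℕ):ℝ) := by positivity
          push_cast at h0
          linarith
        gcongr
    have hgtend : Filter.Tendsto
        (fun i : ℕ => R - ((1 + (i + M) : ℕ) : ℝ) / ((N (i + M) : ℕ) : ℝ))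
        Filter.atTop (nhds R) := by
      have := (tendsto_const_nhds (x := R) (f := Filter.atTop (α := ℕ))).sub h10
      simpa using this
    refine tendsto_of_tendsto_of_tendsto_of_le_of_le hgtend tendsto_const_nhds
      (fun i => hlow i) (fun i => hup i)
  · -- the distance bound
    intro i
    rw [one_mul]
    have h1 := hIdist i
    calc ((q ^ (i + M) - 1 : ℕ) : ℝ) ^ α ≤ (dd (i + M) : ℝ) := Nat.le_ceil _
      _ ≤ (cycDist (I i) : ℝ) := by exact_mod_cast h1
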